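/- The CP-rank of a block diagonal matrix is the sum of the CP-ranks of its blocks: if M = diag(M₁, M₂) with M₁, M₂ completely positive, then rank_cp(M) = rank_cp(M₁) + rank_cp(M₂). -/

import Mathlib

noncomputable def cpRank {n : Type*} [Fintype n] (M : Matrix n n ℝ) : ℕ :=
  sInf {r : ℕ | ∃ a : Fin r → n → ℝ,
    (∀ ℓ i, 0 ≤ a ℓ i) ∧ M = ∑ ℓ, Matrix.vecMulVec (a ℓ) (a ℓ)}

lemma cpRank_le_card {n : Type*} [Fintype n] (M : Matrix n n ℝ) {r : ℕ}
    (b : Fin r → n → ℝ) (hb : ∀ ℓ i, 0 ≤ b ℓ i)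
    (hM : M = ∑ ℓ, Matrix.vecMulVec (b ℓ) (b ℓ))
    (S : Finset (Fin r)) (hS : ∀ ℓ ∉ S, b ℓ = 0) :
    cpRank M ≤ S.card := by
  apply Nat.sInf_le
  refine ⟨fun k => b (S.equivFin.symm k : Fin r), fun k i => hb _ _, ?_⟩
  rw [hM]
  have h1 : ∑ ℓ, Matrix.vecMulVec (b ℓ) (b ℓ) = ∑ ℓ ∈ S, Matrix.vecMulVec (b ℓ) (b ℓ) := by
    symm
    apply Finset.sum_subset (Finset.subset_univ S)
    intro x _ hx
    rw [hS x hx]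
    ext i j
    simp [Matrix.vecMulVec_apply]
  rw [h1, ← Finset.sum_coe_sort S (fun ℓ => Matrix.vecMulVec (b ℓ) (b ℓ))]
  exact (Equiv.sum_comp S.equivFin.symm
    (fun x : S => Matrix.vecMulVec (b (x:Fin r)) (b (x:Fin r)))).symm

theorem cpRank_blockDiag {m n : ℕ}
    (M₁ : Matrix (Fin m) (Fin m) ℝ) (M₂ : Matrix (Fin n) (Fin n) ℝ)
    (h₁ : ∃ (r : ℕ) (a : Fin r → Fin m → ℝ),
      (∀ ℓ i, 0 ≤ a ℓ i) ∧ M₁ = ∑ ℓ, Matrix.vecMulVec (a ℓ) (a ℓ))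
    (h₂ : ∃ (r : ℕ) (a : Fin r → Fin n → ℝ),
      (∀ ℓ i, 0 ≤ a ℓ i) ∧ M₂ = ∑ ℓ, Matrix.vecMulVec (a ℓ) (a ℓ)) :
    cpRank (Matrix.fromBlocks M₁ 0 0 M₂) = cpRank M₁ + cpRank M₂ := by
  classical
  have hne₁ : {r : ℕ | ∃ a : Fin r → Fin m → ℝ,
      (∀ ℓ i, 0 ≤ a ℓ i) ∧ M₁ = ∑ ℓ, Matrix.vecMulVec (a ℓ) (a ℓ)}.Nonempty := by
    obtain ⟨r, a, h⟩ := h₁; exact ⟨r, a, h⟩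
  have hne₂ : {r : ℕ | ∃ a : Fin r → Fin n → ℝ,
      (∀ ℓ i, 0 ≤ a ℓ i) ∧ M₂ = ∑ ℓ, Matrix.vecMulVec (a ℓ) (a ℓ)}.Nonempty := by
    obtain ⟨r, a, h⟩ := h₂; exact ⟨r, a, h⟩
  obtain ⟨a₁, ha₁, hM₁⟩ := Nat.sInf_mem hne₁
  obtain ⟨a₂, ha₂, hM₂⟩ := Nat.sInf_mem hne₂
  set r₁ := cpRank M₁ with hr₁
  set r₂ := cpRank M₂ with hr₂
  -- combined decomposition
  set c : Fin r₁ ⊕ Fin r₂ → (Fin m ⊕ Fin n) → ℝ :=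
    Sum.elim (fun ℓ => Sum.elim (a₁ ℓ) 0) (fun ℓ => Sum.elim 0 (a₂ ℓ)) with hc
  have hmem : (r₁ + r₂) ∈ {r : ℕ | ∃ a : Fin r → (Fin m ⊕ Fin n) → ℝ,
      (∀ ℓ i, 0 ≤ a ℓ i) ∧
      Matrix.fromBlocks M₁ 0 0 M₂ = ∑ ℓ, Matrix.vecMulVec (a ℓ) (a ℓ)} := by
    refine ⟨fun k => c (finSumFinEquiv.symm k), ?_, ?_⟩
    · rintro ℓ i
      rcases hsk : finSumFinEquiv.symm ℓ with ℓ' | ℓ' <;> rcases i with i | i <;>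
        simp only [hc, hsk, Sum.elim_inl, Sum.elim_inr, Pi.zero_apply] <;>
        first | exact le_refl 0 | exact ha₁ _ _ | exact ha₂ _ _
    · have := Equiv.sum_comp finSumFinEquiv.symm
        (fun s => Matrix.vecMulVec (c s) (c s))
      rw [this, Fintype.sum_sum_type]
      ext i j
      rcases i with i | i <;> rcases j with j | j <;>
        simp [hc, Matrix.vecMulVec_apply, Matrix.sum_apply, hM₁, hM₂,
          Matrix.fromBlocks] <;> rfl
  -- ≤ direction
  have hle : cpRank (Matrix.fromBlocks M₁ 0 0 M₂) ≤ r₁ + r₂ := Nat.sInf_le hmem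
  -- ≥ direction
  obtain ⟨a, ha, hM⟩ := Nat.sInf_mem (⟨r₁ + r₂, hmem⟩ :
    {r : ℕ | ∃ a : Fin r → (Fin m ⊕ Fin n) → ℝ,
      (∀ ℓ i, 0 ≤ a ℓ i) ∧
      Matrix.fromBlocks M₁ 0 0 M₂ = ∑ ℓ, Matrix.vecMulVec (a ℓ) (a ℓ)}.Nonempty)
  set R := cpRank (Matrix.fromBlocks M₁ 0 0 M₂) with hR
  set b : Fin R → Fin m → ℝ := fun ℓ i => a ℓ (Sum.inl i) with hbdef
  set d : Fin R → Fin n → ℝ := fun ℓ j => a ℓ (Sum.inr j) with hddef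
  have horth : ∀ ℓ i j, a ℓ (Sum.inl i) * a ℓ (Sum.inr j) = 0 := by
    intro ℓ i j
    have h0 : (Matrix.fromBlocks M₁ 0 0 M₂) (Sum.inl i) (Sum.inr j) = 0 := by
      simp [Matrix.fromBlocks]
    rw [hM, Matrix.sum_apply] at h0
    have := (Finset.sum_eq_zero_iff_of_nonneg (fun ℓ' _ =>
      mul_nonneg (ha ℓ' (Sum.inl i)) (ha ℓ' (Sum.inr j)))).mp ?_ ℓ (Finset.mem_univ ℓ)
    · simpa [Matrix.vecMulVec_apply] using this
    · simpa [Matrix.vecMulVec_apply] using h0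
  have hMb : M₁ = ∑ ℓ, Matrix.vecMulVec (b ℓ) (b ℓ) := by
    ext i j
    have := congrFun (congrFun hM (Sum.inl i)) (Sum.inl j)
    simp [Matrix.fromBlocks, Matrix.sum_apply, Matrix.vecMulVec_apply, hbdef] at this ⊢
    exact this
  have hMd : M₂ = ∑ ℓ, Matrix.vecMulVec (d ℓ) (d ℓ) := by
    ext i j
    have := congrFun (congrFun hM (Sum.inr i)) (Sum.inr j)
    simp [Matrix.fromBlocks, Matrix.sum_apply, Matrix.vecMulVec_apply, hddef] at this ⊢
    exact this
  set S : Finset (Fin R) := Finset.univ.filter (fun ℓ => b ℓ ≠ 0) with hSdef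
  have h1 : cpRank M₁ ≤ S.card := by
    apply cpRank_le_card M₁ b (fun ℓ i => ha ℓ (Sum.inl i)) hMb
    intro ℓ hℓ
    by_contra hb
    exact hℓ (Finset.mem_filter.mpr ⟨Finset.mem_univ ℓ, hb⟩)
  have h2 : cpRank M₂ ≤ Sᶜ.card := by
    apply cpRank_le_card M₂ d (fun ℓ j => ha ℓ (Sum.inr j)) hMd
    intro ℓ hℓ
    have hℓS : ℓ ∈ S := by simpa using hℓ
    have hbne : b ℓ ≠ 0 := (Finset.mem_filter.mp hℓS).2
    obtain ⟨i, hi⟩ := Function.ne_iff.mp hbne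
    funext j
    have := horth ℓ i j
    have hbi : 0 < a ℓ (Sum.inl i) := lt_of_le_of_ne (ha ℓ (Sum.inl i)) (Ne.symm hi)
    have := (mul_eq_zero.mp this).resolve_left (ne_of_gt hbi)
    simpa [hddef] using this
  have hcard : S.card + Sᶜ.card = R := by
    rw [Finset.card_add_card_compl]
    simp
  omega
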